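/- Let X be a real Hilbert space, F : X → X a monotone operator, and suppose the Tikhonov-type variational source condition ⟨x† − x̄, x† − x⟩ ≤ β‖x† − x‖² + ψ(‖F(x) − F(x†)‖) holds for all x ∈ M, where β ∈ [0,1), ψ is an index function extended by ψ(0) = 0, M ⊆ X, and F(x†) = y. Let yδ ∈ X with ‖y − yδ‖ ≤ δ, δ > 0, α > 0, and let xαδ ∈ X satisfy F(xαδ) + α(xαδ − x̄) = yδ with xαδ ∈ M. Then, with c = ‖x† − x̄‖, one has ‖xαδ − x†‖² ≤ δ²/((1 − β)² α²) + (2/(1 − β)) ψ(δ + c α). -/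

import Mathlib

open RealInnerProductSpace Filter

set_option maxHeartbeats 1000000 in
/-- Error estimate for Lavrentiev regularization under the Tikhonov-type variational
source condition (Theorem 3.1, estimate (estim1)):
‖x_α^δ − x†‖² ≤ δ²/((1−β)²α²) + (2/(1−β)) ψ(δ + ‖x†−x̄‖ α). -/
theorem stmt_9 {X : Type*} [NormedAddCommGroup X] [InnerProductSpace ℝ X] [CompleteSpace X]
    (F : X → X) (hmono : ∀ x x' : X, 0 ≤ ⟪F x - F x', x - x'⟫)
    (y xbar xdag : X) (hsol : F xdag = y)
    (β : ℝ) (hβ0 : 0 ≤ β) (hβ1 : β < 1)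
    (ψ : ℝ → ℝ) (hψcont : ContinuousOn ψ (Set.Ioi 0))
    (hψmono : StrictMonoOn ψ (Set.Ioi 0)) (hψpos : ∀ t > (0:ℝ), 0 < ψ t)
    (hψ0 : Tendsto ψ (nhdsWithin 0 (Set.Ioi 0)) (nhds 0)) (hψzero : ψ 0 = 0)
    (M : Set X)
    (hvsc : ∀ x ∈ M,
      ⟪xdag - xbar, xdag - x⟫ ≤ β * ‖xdag - x‖ ^ 2 + ψ ‖F x - F xdag‖)
    (δ α : ℝ) (hδ : 0 < δ) (hα : 0 < α) (yδ : X) (hnoise : ‖y - yδ‖ ≤ δ)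
    (xad : X) (hxadM : xad ∈ M) (hlav : F xad + α • (xad - xbar) = yδ) :
    ‖xad - xdag‖ ^ 2 ≤
      δ ^ 2 / ((1 - β) ^ 2 * α ^ 2) + (2 / (1 - β)) * ψ (δ + ‖xdag - xbar‖ * α) := by
  obtain ⟨e, he⟩ : ∃ e : X, e = xad - xdag := ⟨_, rfl⟩
  obtain ⟨w, hw⟩ : ∃ w : X, w = F xad - F xdag := ⟨_, rfl⟩
  obtain ⟨c, hc⟩ : ∃ c : ℝ, c = ‖xdag - xbar‖ := ⟨_, rfl⟩
  have hs : (0:ℝ) < 1 - β := sub_pos.mpr hβ1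
  have hcnn : (0:ℝ) ≤ c := hc ▸ norm_nonneg _
  have hpos : (0:ℝ) < δ + c * α := by positivity
  -- key identity
  have hkey : w + α • (xad - xbar) = yδ - y := by
    rw [hw, hsol, ← hlav]; abel
  have hwe : (0:ℝ) ≤ ⟪w, e⟫ := by rw [he, hw]; exact hmono xad xdag
  -- Step 1: ‖w‖ ≤ δ + c * α
  have hae : α • e = α • (xbar - xdag) + ((yδ - y) - w) := by
    rw [he, ← hkey]; module
  have hip : α * ⟪w, e⟫ = α * ⟪w, xbar - xdag⟫ + (⟪w, yδ - y⟫ - ‖w‖ ^ 2) := by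
    have h : (⟪w, α • e⟫ : ℝ) = ⟪w, α • (xbar - xdag) + ((yδ - y) - w)⟫ := by rw [hae]
    rw [real_inner_smul_right, inner_add_right, real_inner_smul_right,
      inner_sub_right w (yδ - y) w, real_inner_self_eq_norm_sq] at h
    linarith
  have hcs1 : ⟪w, xbar - xdag⟫ ≤ ‖w‖ * c := by
    calc ⟪w, xbar - xdag⟫ ≤ ‖w‖ * ‖xbar - xdag‖ := real_inner_le_norm _ _
    _ = ‖w‖ * c := by rw [hc, norm_sub_rev]
  have hcs2 : ⟪w, yδ - y⟫ ≤ ‖w‖ * δ := by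
    calc ⟪w, yδ - y⟫ ≤ ‖w‖ * ‖yδ - y‖ := real_inner_le_norm _ _
    _ ≤ ‖w‖ * δ := by
        have : ‖yδ - y‖ ≤ δ := by rwa [norm_sub_rev]
        exact mul_le_mul_of_nonneg_left this (norm_nonneg _)
  have hwsq : ‖w‖ ^ 2 ≤ ‖w‖ * (δ + c * α) := by nlinarith [mul_nonneg hα.le hwe]
  have hwbound : ‖w‖ ≤ δ + c * α := by
    rcases eq_or_lt_of_le (norm_nonneg w) with h0 | h0
    · rw [← h0]; exact hpos.le
    · nlinarith
  -- Step 2: test equation with e, use VSC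
  have hip2 : ⟪w, e⟫ + α * (‖e‖ ^ 2 + ⟪xdag - xbar, e⟫) = ⟪yδ - y, e⟫ := by
    have h2 : xad - xbar = e + (xdag - xbar) := by rw [he]; abel
    have h1 : ⟪w + α • (xad - xbar), e⟫ = ⟪yδ - y, e⟫ := by rw [hkey]
    rw [h2, inner_add_left, real_inner_smul_left, inner_add_left,
      real_inner_self_eq_norm_sq] at h1
    linarith
  have hcs3 : ⟪yδ - y, e⟫ ≤ δ * ‖e‖ := by
    calc ⟪yδ - y, e⟫ ≤ ‖yδ - y‖ * ‖e‖ := real_inner_le_norm _ _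
    _ ≤ δ * ‖e‖ := by
        have : ‖yδ - y‖ ≤ δ := by rwa [norm_sub_rev]
        exact mul_le_mul_of_nonneg_right this (norm_nonneg _)
  have hvsce : ⟪xdag - xbar, xdag - xad⟫ ≤ β * ‖e‖ ^ 2 + ψ ‖w‖ := by
    have h := hvsc xad hxadM
    have h3 : ‖xdag - xad‖ = ‖e‖ := by rw [he, norm_sub_rev]
    have h4 : ‖F xad - F xdag‖ = ‖w‖ := by rw [hw]
    rwa [h3, h4] at h
  have hflip : ⟪xdag - xbar, e⟫ = - ⟪xdag - xbar, xdag - xad⟫ := by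
    rw [he, ← inner_neg_right]; congr 1; abel
  -- Step 3: monotonicity of ψ
  have hψw : ψ ‖w‖ ≤ ψ (δ + c * α) := by
    rcases eq_or_lt_of_le (norm_nonneg w) with h0 | h0
    · rw [← h0, hψzero]; exact (hψpos _ hpos).le
    · exact hψmono.monotoneOn h0 hpos hwbound
  -- Combine
  have hmain : α * (1 - β) * ‖e‖ ^ 2 ≤ δ * ‖e‖ + α * ψ (δ + c * α) := by
    nlinarith
  have hfin : (1 - β) ^ 2 * α ^ 2 * ‖e‖ ^ 2 ≤
      δ ^ 2 + 2 * (1 - β) * α ^ 2 * ψ (δ + c * α) := by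
    nlinarith [sq_nonneg ((1 - β) * α * ‖e‖ - δ),
      mul_le_mul_of_nonneg_left hmain (mul_pos hs hα).le]
  have hgoal : ‖e‖ ^ 2 ≤ δ ^ 2 / ((1 - β) ^ 2 * α ^ 2) + (2 / (1 - β)) * ψ (δ + c * α) := by
    rw [show δ ^ 2 / ((1 - β) ^ 2 * α ^ 2) + (2 / (1 - β)) * ψ (δ + c * α)
        = (δ ^ 2 + 2 * (1 - β) * α ^ 2 * ψ (δ + c * α)) / ((1 - β) ^ 2 * α ^ 2) by
      field_simp]
    rw [le_div_iff₀ (by positivity)]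
    linarith
  rwa [← he, ← hc]
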